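/- Fix d ≥ 0 and σ_U > 0, and define h : (0, ∞) → ℝ by h(a) = σ_U²·(a² + σ_U²·d²)/(a + σ_U²)², the expected fidelity error as a function of the AI prior variance a = σ_A². Then h is strictly decreasing on (0, d²) and strictly increasing on (d², ∞). That is, for a fixed signal noise level, shrinking the AI prior variance (censoring) strictly reduces the fidelity error of users with σ_A² > (μ_A − θ)² and strictly increases that of users with σ_A² < (μ_A − θ)². -/
import Mathlib


/-- Effect of the AI prior variance on the fidelity error: for fixed signal
noise `σU` and uniqueness `d`, the expected fidelity error
`h(a) = σU²(a² + σU²d²)/(a + σU²)²`, as a function of the AI prior variance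
`a = σA²`, is strictly decreasing on `(0, d²)` and strictly increasing on
`(d², ∞)`. -/
theorem fidelity_error_in_prior_variance (d σU : ℝ) (hd : 0 ≤ d) (hU : 0 < σU)
    (h : ℝ → ℝ) (hh : ∀ a, h a = σU ^ 2 * (a ^ 2 + σU ^ 2 * d ^ 2) / (a + σU ^ 2) ^ 2) :
    StrictAntiOn h (Set.Ioo 0 (d ^ 2)) ∧ StrictMonoOn h (Set.Ioi (d ^ 2)) := by
  have hc : (0:ℝ) < σU ^ 2 := by positivity
  constructor
  · intro a ha b hb hab
    rw [hh, hh]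
    obtain ⟨ha0, had⟩ := ha
    obtain ⟨hb0, hbd⟩ := hb
    have hda : (0:ℝ) < a + σU ^ 2 := by linarith
    have hdb : (0:ℝ) < b + σU ^ 2 := by linarith
    rw [div_lt_div_iff₀ (by positivity) (by positivity)]
    have key : 0 < σU ^ 2 * (b - a) * ((d ^ 2 - a) * (b + σU ^ 2) + (d ^ 2 - b) * (a + σU ^ 2)) := by
      apply mul_pos (mul_pos hc (by linarith))
      have h1 : 0 < (d ^ 2 - a) * (b + σU ^ 2) := mul_pos (by linarith) hdb
      have h2 : 0 < (d ^ 2 - b) * (a + σU ^ 2) := mul_pos (by linarith) hda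
      linarith
    nlinarith [key]
  · intro a ha b hb hab
    rw [hh, hh]
    simp only [Set.mem_Ioi] at ha hb
    have hd2 : (0:ℝ) ≤ d ^ 2 := by positivity
    have hda : (0:ℝ) < a + σU ^ 2 := by linarith
    have hdb : (0:ℝ) < b + σU ^ 2 := by linarith
    rw [div_lt_div_iff₀ (by positivity) (by positivity)]
    have key : 0 < σU ^ 2 * (b - a) * ((a - d ^ 2) * (b + σU ^ 2) + (b - d ^ 2) * (a + σU ^ 2)) := by
      apply mul_pos (mul_pos hc (by linarith))
      have h1 : 0 < (a - d ^ 2) * (b + σU ^ 2) := mul_pos (by linarith) hdb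
      have h2 : 0 < (b - d ^ 2) * (a + σU ^ 2) := mul_pos (by linarith) hda
      linarith
    nlinarith [key]
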